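/- Let (A, G, σ) be a C*-dynamical system with A unital and σ an n-majorizing action for some n ≥ 1. Then σ is (n+1)-covering, i.e., for every non-zero a ∈ A₊ and ε > 0 there exist d₁,…,d_{n+1} ∈ A and g₁,…,g_{n+1} ∈ G with ‖Σⱼ dⱼ* σ_{gⱼ}(a) dⱼ − 1‖ < ε. -/
import Mathlib


/-- On a unital C*-algebra, every `n`-majorizing action (`n ≥ 1`) is
`(n+1)`-covering. -/
theorem stmt9 {A G : Type*} [CStarAlgebra A] [PartialOrder A] [StarOrderedRing A] [Group G]
    (σ : G → A ≃⋆ₐ[ℂ] A) (hσ : ∀ g h x, σ (g * h) x = σ g (σ h x))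
    (n : ℕ) (hn : 1 ≤ n)
    (hmaj : ∀ a : A, 0 ≤ a → a ≠ 0 → ∀ b : A, 0 ≤ b → ¬ IsUnit b →
      ∀ ε : ℝ, 0 < ε →
        ∃ (d : Fin n → A) (g : Fin n → G),
          ‖(∑ j, star (d j) * σ (g j) a * d j) - b‖ < ε) :
    ∀ a : A, 0 ≤ a → a ≠ 0 → ∀ ε : ℝ, 0 < ε →
      ∃ (d : Fin (n + 1) → A) (g : Fin (n + 1) → G),
        ‖(∑ j, star (d j) * σ (g j) a * d j) - 1‖ < ε := by
  intro a ha ha0 ε hε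
  have hA : Nontrivial A := nontrivial_of_ne a 0 ha0
  have hnorm : (0:ℝ) < ‖a‖ := norm_pos_iff.mpr ha0
  -- `σ 1 = id`
  have hσ1 : ∀ x : A, σ 1 x = x := by
    intro x
    have := hσ 1 1 x
    rw [one_mul] at this
    exact ((σ 1).injective this.symm)
  -- the normalized element
  set c : A := ‖a‖⁻¹ • a with hc
  have hc0 : 0 ≤ c := smul_nonneg (inv_nonneg.mpr hnorm.le) ha
  have hcnorm : ‖c‖ = 1 := by
    rw [hc, norm_smul, norm_inv, norm_norm]
    field_simp
  -- `c ^ 3 ≤ 1`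
  have hc3nonneg : 0 ≤ c ^ 3 := CStarAlgebra.pow_nonneg hc0 3
  have hc3le : c ^ 3 ≤ 1 := by
    have h1 : ‖c ^ 3‖ ≤ 1 := by
      calc ‖c ^ 3‖ ≤ ‖c‖ ^ 3 := norm_pow_le' c (by norm_num)
        _ = 1 := by rw [hcnorm]; norm_num
    have := (CStarAlgebra.norm_le_iff_le_algebraMap (c ^ 3) (r := 1) zero_le_one hc3nonneg).mp h1
    simpa using this
  have hb0 : 0 ≤ 1 - c ^ 3 := sub_nonneg.mpr hc3le
  -- `1 - c ^ 3` is not a unit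
  have hbnu : ¬ IsUnit (1 - c ^ 3) := by
    intro hu
    have hone : (1:ℝ) ∈ spectrum ℝ c := by
      have := CStarAlgebra.norm_mem_spectrum_of_nonneg hc0
      rwa [hcnorm] at this
    have hfac : 1 - c ^ 3 = (1 - c) * (1 + c + c ^ 2) := by noncomm_ring
    have hcomm : Commute (1 - c) (1 + c + c ^ 2) := by
      unfold Commute SemiconjBy
      noncomm_ring
    rw [hfac] at hu
    have h1c : IsUnit (1 - c) := (hcomm.isUnit_mul_iff.mp hu).1
    rw [spectrum.mem_iff] at hone
    exact hone (by simpa using h1c)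
  -- apply the majorizing property
  obtain ⟨d, g, hd⟩ := hmaj a ha ha0 (1 - c ^ 3) hb0 hbnu ε hε
  -- the extra term
  set t : ℝ := Real.sqrt (‖a‖⁻¹ ^ 3) with ht
  have ht2 : t * t = ‖a‖⁻¹ ^ 3 := Real.mul_self_sqrt (by positivity)
  have hasa : IsSelfAdjoint a := IsSelfAdjoint.of_nonneg ha
  refine ⟨Fin.snoc d (t • a), Fin.snoc g 1, ?_⟩
  have hlast : star ((t:ℝ) • a) * σ 1 a * (t • a) = c ^ 3 := by
    rw [hσ1]
    rw [star_smul, star_trivial, hasa.star_eq]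
    rw [hc, smul_pow]
    have h3 : a ^ 3 = a * a * a := by noncomm_ring
    rw [h3, ← ht2, mul_smul]
    simp only [smul_mul_assoc, mul_smul_comm, mul_assoc]
  rw [Fin.sum_univ_castSucc]
  simp only [Fin.snoc_castSucc, Fin.snoc_last]
  rw [hlast]
  have : (∑ j : Fin n, star (d j) * σ (g j) a * d j) + c ^ 3 - 1
      = (∑ j : Fin n, star (d j) * σ (g j) a * d j) - (1 - c ^ 3) := by abel
  rw [this]
  exact hd
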